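/- For n ≥ 3, let J be a φ_n-injective, weakly connected quiver containing a walk of length n−1. Then J contains a closed walk, and if ℓ is the minimal length of a closed walk in J, then ℓ divides n. -/

import Mathlib

/-- A quiver: vertex set, edge set, source and target maps. -/
structure Quiv where
  V : Type
  E : Type
  s : E → V
  t : E → V

/-- A quiver homomorphism. -/
@[ext]
structure QuivHom (G H : Quiv) where
  onV : G.V → H.V
  onE : G.E → H.E
  comm_s : ∀ e, H.s (onE e) = onV (G.s e)
  comm_t : ∀ e, H.t (onE e) = onV (G.t e)

/-- Identity quiver homomorphism. -/
def QuivHom.id (G : Quiv) : QuivHom G G :=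
  ⟨_root_.id, _root_.id, fun _ => rfl, fun _ => rfl⟩

/-- Composition of quiver homomorphisms. -/
def QuivHom.comp {G H K : Quiv} (g : QuivHom H K) (f : QuivHom G H) : QuivHom G K :=
  ⟨g.onV ∘ f.onV, g.onE ∘ f.onE,
    fun e => by simp [Function.comp, g.comm_s, f.comm_s],
    fun e => by simp [Function.comp, g.comm_t, f.comm_t]⟩

/-- The directed path `P_n` with vertices `a_0, …, a_{n-1}` and edges `a_i → a_{i+1}`. -/
def Quiv.path (n : ℕ) : Quiv :=
  ⟨Fin n, Fin (n - 1), fun i => ⟨i.val, by have := i.isLt; omega⟩,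
    fun i => ⟨i.val + 1, by have := i.isLt; omega⟩⟩

/-- The directed cycle `C_n`. -/
def Quiv.cyc (n : ℕ) : Quiv :=
  ⟨Fin n, Fin n, _root_.id, fun i => ⟨(i.val + 1) % n, Nat.mod_lt _ i.pos⟩⟩

/-- The natural embedding `φ_n : P_n → C_n`. -/
def pathEmb (n : ℕ) : QuivHom (Quiv.path n) (Quiv.cyc n) where
  onV := _root_.id
  onE := fun i => ⟨i.val, by have := i.isLt; omega⟩
  comm_s := fun e => rfl
  comm_t := fun e => by
    have he := e.isLt
    apply Fin.ext
    show (e.val + 1) % n = e.val + 1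
    exact Nat.mod_eq_of_lt (by omega)

/-- `J` is `φ_n`-injective: every quiver map `P_n → J` factors through `φ_n`. -/
def PhiInj (n : ℕ) (J : Quiv) : Prop :=
  ∀ ψ : QuivHom (Quiv.path n) J, ∃ ψ' : QuivHom (Quiv.cyc n) J,
    ψ'.comp (pathEmb n) = ψ

/-- `v, e` form a walk of length `k` in `J` (only indices `< k` matter). -/
def HasWalk (J : Quiv) (k : ℕ) (v : ℕ → J.V) (e : ℕ → J.E) : Prop :=
  ∀ i < k, J.s (e i) = v i ∧ J.t (e i) = v (i + 1)

/-- There is an edge from `a` to `b` in `J`. -/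
def Quiv.Edge (J : Quiv) (a b : J.V) : Prop := ∃ f, J.s f = a ∧ J.t f = b

/-- A loaded quiver: an edge between every (ordered) pair of vertices. -/
def Quiv.Loaded (J : Quiv) : Prop := ∀ a b, J.Edge a b

/-- `H`, with partitions `A` of its vertices and `B` of its edges indexed by the
vertices and edges of `G`, is a blow-up of `G`. -/
def IsBlowup (G H : Quiv) (A : G.V → Set H.V) (B : G.E → Set H.E) : Prop :=
  (∀ w, ∃! v, w ∈ A v) ∧ (∀ f, ∃! e, f ∈ B e) ∧
  (∀ e f, f ∈ B e → H.s f ∈ A (G.s e) ∧ H.t f ∈ A (G.t e)) ∧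
  (∀ e x y, x ∈ A (G.s e) → y ∈ A (G.t e) → ∃ f ∈ B e, H.s f = x ∧ H.t f = y)

/-- Monomorphisms of quivers: injective vertex and edge maps. -/
def QuivHom.Mono {G H : Quiv} (f : QuivHom G H) : Prop :=
  Function.Injective f.onV ∧ Function.Injective f.onE

/-- A class of quiver morphisms. -/
def MorClass := ∀ D C : Quiv, Set (QuivHom D C)

/-- `J` is injective with respect to a class of morphisms `Φ`. -/
def ClassInjective (Φ : MorClass) (J : Quiv) : Prop :=
  ∀ D C (φ : QuivHom D C), φ ∈ Φ D C → ∀ ψ : QuivHom D J,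
    ∃ ψ' : QuivHom C J, ψ'.comp φ = ψ

/-- Undirected adjacency. -/
def Quiv.Adj (J : Quiv) (a b : J.V) : Prop := J.Edge a b ∨ J.Edge b a

/-- Weak connectivity. -/
def Quiv.WeaklyConnected (J : Quiv) : Prop :=
  ∀ a b : J.V, Relation.ReflTransGen J.Adj a b

/-- `J` has a closed walk of length `m`. -/
def ClosedWalk (J : Quiv) (m : ℕ) : Prop :=
  ∃ v e, HasWalk J m v e ∧ v m = v 0

/-- Cyclic successor on `Fin ℓ`. -/
def finNext {ℓ : ℕ} (i : Fin ℓ) : Fin ℓ := ⟨(i.val + 1) % ℓ, Nat.mod_lt _ i.pos⟩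

/-- Disjoint union (coproduct) of a family of quivers. -/
def Quiv.sigma {Λ : Type} (Jf : Λ → Quiv) : Quiv :=
  ⟨Σ l, (Jf l).V, Σ l, (Jf l).E,
    fun f => ⟨f.1, (Jf f.1).s f.2⟩, fun f => ⟨f.1, (Jf f.1).t f.2⟩⟩

/-- Key consequence of `φ_n`-injectivity: every walk of length `n-1` admits a
closing edge from its last vertex to its first. -/
lemma PhiInj.close_edge (n : ℕ) (hn : 1 ≤ n) (J : Quiv) (hJ : PhiInj n J)
    (v : ℕ → J.V) (e : ℕ → J.E) (h : HasWalk J (n - 1) v e) :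
    ∃ f, J.s f = v (n - 1) ∧ J.t f = v 0 := by
  let ψ : QuivHom (Quiv.path n) J :=
    { onV := fun i => v i.val
      onE := fun i => e i.val
      comm_s := fun i => (h i.val i.isLt).1
      comm_t := fun i => (h i.val i.isLt).2 }
  obtain ⟨ψ', hψ'⟩ := hJ ψ
  have hV : ∀ x : Fin n, ψ'.onV x = v x.val := by
    intro x
    have := congrArg QuivHom.onV hψ'
    exact congrFun this x
  refine ⟨ψ'.onE ⟨n - 1, by omega⟩, ?_, ?_⟩
  · rw [ψ'.comm_s ⟨n - 1, by omega⟩]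
    exact hV ⟨n - 1, by omega⟩
  · rw [ψ'.comm_t ⟨n - 1, by omega⟩]
    have hcy : ((Quiv.cyc n).t ⟨n - 1, by omega⟩ : Fin n) = ⟨0, by omega⟩ := by
      apply Fin.ext
      show (n - 1 + 1) % n = 0
      rw [Nat.sub_add_cancel hn, Nat.mod_self]
    rw [hcy]
    exact hV ⟨0, by omega⟩

/-- Closing a walk of length `k` with a closing edge gives a closed walk of
length `k+1`. -/
lemma closedWalk_of_walk_edge (J : Quiv) (k : ℕ) (v : ℕ → J.V) (e : ℕ → J.E)
    (h : HasWalk J k v e) (f : J.E) (hs : J.s f = v k) (ht : J.t f = v 0) :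
    ClosedWalk J (k + 1) := by
  refine ⟨fun i => if i < k + 1 then v i else v 0,
    fun i => if i < k then e i else f, ?_, ?_⟩
  · intro i hi
    by_cases hik : i < k
    · obtain ⟨h1, h2⟩ := h i hik
      refine ⟨?_, ?_⟩
      · simp only [if_pos hik, if_pos (show i < k + 1 by omega)]; exact h1
      · simp only [if_pos hik, if_pos (show i + 1 < k + 1 by omega)]; exact h2
    · have hik' : i = k := by omega
      subst hik'
      refine ⟨?_, ?_⟩
      · simp only [if_neg hik, if_pos (show i < i + 1 by omega)]; exact hs
      · simp only [if_neg hik, if_neg (show ¬ i + 1 < i + 1 by omega)]; exact ht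
  · simp only [if_neg (show ¬ k + 1 < k + 1 by omega),
      if_pos (show 0 < k + 1 by omega)]

/-- The periodic extension of a closed walk is a walk of any length. -/
lemma periodic_walk (J : Quiv) (ℓ : ℕ) (hℓ : 1 ≤ ℓ) (v : ℕ → J.V) (e : ℕ → J.E)
    (h : HasWalk J ℓ v e) (hcl : v ℓ = v 0) (k : ℕ) :
    HasWalk J k (fun i => v (i % ℓ)) (fun i => e (i % ℓ)) := by
  intro i _
  have hiℓ : i % ℓ < ℓ := Nat.mod_lt _ (by omega)
  obtain ⟨h1, h2⟩ := h (i % ℓ) hiℓ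
  refine ⟨h1, ?_⟩
  show J.t (e (i % ℓ)) = v ((i + 1) % ℓ)
  have hmod : (i + 1) % ℓ = (i % ℓ + 1) % ℓ := (Nat.mod_add_mod i ℓ 1).symm
  by_cases hcase : i % ℓ + 1 = ℓ
  · have h0 : (i + 1) % ℓ = 0 := by rw [hmod, hcase, Nat.mod_self]
    rw [h0, h2, hcase, hcl]
  · have hlt : i % ℓ + 1 < ℓ := by omega
    have h0 : (i + 1) % ℓ = i % ℓ + 1 := by rw [hmod, Nat.mod_eq_of_lt hlt]
    rw [h0, h2]

/-- a `φ_n`-injective weakly connected quiver with a walk of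
length `n-1` has a closed walk, and the minimal closed-walk length divides `n`. -/
theorem min_closed_walk_dvd (n : ℕ) (hn : 3 ≤ n) (J : Quiv) (hJ : PhiInj n J)
    (hc : J.WeaklyConnected)
    (hw : ∃ (v : ℕ → J.V) (e : ℕ → J.E), HasWalk J (n - 1) v e) :
    (∃ m, 1 ≤ m ∧ ClosedWalk J m) ∧
    (∀ ℓ, IsLeast {m | 1 ≤ m ∧ ClosedWalk J m} ℓ → ℓ ∣ n) := by
  obtain ⟨v, e, hwalk⟩ := hw
  obtain ⟨f, hfs, hft⟩ := PhiInj.close_edge n (by omega) J hJ v e hwalk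
  have hcwn : ClosedWalk J n := by
    have := closedWalk_of_walk_edge J (n - 1) v e hwalk f hfs hft
    rwa [Nat.sub_add_cancel (by omega)] at this
  constructor
  · exact ⟨n, by omega, hcwn⟩
  · rintro ℓ ⟨⟨hℓ1, v₁, e₁, hw₁, hcl₁⟩, hlb⟩
    set r := (n - 1) % ℓ with hr
    have hrℓ : r < ℓ := Nat.mod_lt _ (by omega)
    -- periodic extension, walk of length n-1
    have hper : HasWalk J (n - 1) (fun i => v₁ (i % ℓ)) (fun i => e₁ (i % ℓ)) :=
      periodic_walk J ℓ hℓ1 v₁ e₁ hw₁ hcl₁ (n - 1)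
    obtain ⟨g, hgs, hgt⟩ := PhiInj.close_edge n (by omega) J hJ _ _ hper
    -- a closed walk of length r + 1
    have hwr : HasWalk J r v₁ e₁ := fun i hi => hw₁ i (by omega)
    have hcw : ClosedWalk J (r + 1) :=
      closedWalk_of_walk_edge J r v₁ e₁ hwr g hgs hgt
    have hle : ℓ ≤ r + 1 := hlb ⟨by omega, hcw⟩
    have hreq : r = ℓ - 1 := by omega
    have hdm := Nat.div_add_mod (n - 1) ℓ
    refine ⟨(n - 1) / ℓ + 1, ?_⟩
    rw [Nat.mul_add, Nat.mul_one]
    omega
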